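/- Let a and b be symmetric, primitive random walks on ℤ, all of whose step sizes are odd, with the same return probabilities (c_n(a) = c_n(b) for all n ≥ 1). Let f and g be the characteristic functions of a and b respectively. Suppose η ∈ (0,1) and φ_f, φ_g : [1−η, 1] → [0, π/2] are continuous on [1−η, 1], continuously differentiable on (1−η, 1), satisfy φ_f(1) = φ_g(1) = 0, f(φ_f(y)) = y and g(φ_g(y)) = y for all y ∈ [1−η, 1]. Then there exists μ > 0 such that ∫_{1−η}^{1} y^{2n} (φ_f'(y) − φ_g'(y)) dy = o(e^{−2μn}) as n → ∞. -/

import Mathlib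

open Filter Asymptotics

/-- A random walk on `ℤ`: nonnegative step probabilities summing to `1`,
with `limsup a(n)^(1/n) < 1` (taken over both tails). -/
def IsRandomWalk (a : ℤ → ℝ) : Prop :=
  (∀ n : ℤ, 0 ≤ a n) ∧ (∑' n : ℤ, a n) = 1 ∧
    Filter.limsup (fun n : ℕ => (max (a (n : ℤ)) (a (-(n : ℤ)))) ^ (1 / (n : ℝ)))
      Filter.atTop < 1

/-- The `n`-th return probability of the random walk `a`: the value at `0` of the
`n`-fold convolution of `a` with itself. -/
noncomputable def returnProb (a : ℤ → ℝ) (n : ℕ) : ℝ :=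
  ∑' k : Fin n → ℤ, if (∑ i, k i) = 0 then ∏ i, a (k i) else 0

/-- The characteristic function `f(x) = ∑_{k ∈ ℤ} a(k) e^{i k x}` of the walk `a`. -/
noncomputable def charFun (a : ℤ → ℝ) (x : ℝ) : ℂ :=
  ∑' k : ℤ, (a k : ℂ) * Complex.exp (Complex.I * k * x)


noncomputable def rwF (a : ℤ → ℝ) (x : ℝ) : ℝ := ∑' k : ℤ, a k * Real.cos (k * x)

section Aux
open Complex MeasureTheory Set

lemma tsum_odd {g : ℤ → ℝ} (hg : ∀ k, g (-k) = - g k) : ∑' k, g k = 0 := by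
  by_cases hs : Summable g
  · have h1 : ∑' k, g (-(k : ℤ)) = ∑' k, g k := (Equiv.neg ℤ).tsum_eq g
    have h2 : ∑' k, g (-(k : ℤ)) = - ∑' k, g k := by
      simp only [hg]; exact tsum_neg
    linarith [h1.symm.trans h2]
  · exact tsum_eq_zero_of_not_summable hs

lemma summable_pi_prod {c : ℤ → ℝ} (hc : Summable c) (h0 : ∀ k, 0 ≤ c k) (n : ℕ) :
    Summable (fun k : Fin n → ℤ => ∏ i, c (k i)) := by
  induction n with
  | zero => exact .of_finite
  | succ n ih =>
    have h := hc.mul_of_nonneg ih h0 (fun k => Finset.prod_nonneg fun i _ => h0 _)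
    have := (Fin.consEquiv fun _ => ℤ).symm.summable_iff.2 h
    refine this.congr fun k => ?_
    simp [Fin.prod_univ_succ, Fin.consEquiv, Fin.tail]

lemma tsum_pi_prod {R} [NormedCommRing R] [NormOneClass R] [CompleteSpace R] (c : ℤ → R)
    (hc : Summable fun m => ‖c m‖) (n : ℕ) :
    (∑' m, c m) ^ n = ∑' k : Fin n → ℤ, ∏ i, c (k i) := by
  induction n with
  | zero =>
    simp only [pow_zero, Finset.univ_eq_empty, Finset.prod_empty]
    exact (tsum_eq_single (f := fun _ : Fin 0 → ℤ => (1 : R)) default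
      fun b hb => absurd (Subsingleton.elim b default) hb).symm
  | succ n ih =>
    have hs : Summable fun k : Fin n → ℤ => ‖∏ i, c (k i)‖ := by
      refine Summable.of_nonneg_of_le (fun _ => norm_nonneg _)
        (fun k => Finset.norm_prod_le _ _) (summable_pi_prod hc (fun _ => norm_nonneg _) n)
    rw [pow_succ, mul_comm, ih, tsum_mul_tsum_of_summable_norm hc hs,
      ← (Fin.consEquiv fun _ => ℤ).symm.tsum_eq]
    refine tsum_congr fun k => ?_
    simp [Fin.prod_univ_succ, Fin.consEquiv, Fin.tail]

end Aux

section RWBasic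
open Complex MeasureTheory Set

variable {a : ℤ → ℝ}

lemma rw_summable (h0 : ∀ n, 0 ≤ a n) (h1 : (∑' n, a n) = 1) : Summable a := by
  by_contra hs
  rw [tsum_eq_zero_of_not_summable hs] at h1; norm_num at h1

lemma rw_summable_cos (hs : Summable a) (h0 : ∀ n, 0 ≤ a n) (x : ℝ) :
    Summable fun k : ℤ => a k * Real.cos (k * x) := by
  refine Summable.of_norm_bounded hs fun k => ?_
  rw [norm_mul]
  calc ‖a k‖ * ‖Real.cos (k * x)‖ ≤ ‖a k‖ * 1 :=
        mul_le_mul_of_nonneg_left (by rw [Real.norm_eq_abs]; exact Real.abs_cos_le_one _)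
          (norm_nonneg _)
    _ = a k := by rw [mul_one, Real.norm_eq_abs, _root_.abs_of_nonneg (h0 k)]

lemma rw_summable_sin (hs : Summable a) (h0 : ∀ n, 0 ≤ a n) (x : ℝ) :
    Summable fun k : ℤ => a k * Real.sin (k * x) := by
  refine Summable.of_norm_bounded hs fun k => ?_
  rw [norm_mul]
  calc ‖a k‖ * ‖Real.sin (k * x)‖ ≤ ‖a k‖ * 1 :=
        mul_le_mul_of_nonneg_left (by rw [Real.norm_eq_abs]; exact Real.abs_sin_le_one _)
          (norm_nonneg _)
    _ = a k := by rw [mul_one, Real.norm_eq_abs, _root_.abs_of_nonneg (h0 k)]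

lemma charFun_term_eq (k : ℤ) (x : ℝ) :
    (a k : ℂ) * Complex.exp (Complex.I * k * x)
      = ((a k * Real.cos (k * x) : ℝ) : ℂ) + ((a k * Real.sin (k * x) : ℝ) : ℂ) * Complex.I := by
  have h : Complex.I * k * x = ((k * x : ℝ) : ℂ) * Complex.I := by push_cast; ring
  rw [h, Complex.exp_mul_I, ← Complex.ofReal_cos, ← Complex.ofReal_sin]
  push_cast
  ring

lemma charFun_eq_rwF (h0 : ∀ n, 0 ≤ a n) (hs : Summable a) (hsym : ∀ n, a n = a (-n)) (x : ℝ) :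
    charFun a x = ((rwF a x : ℝ) : ℂ) := by
  have hsc := rw_summable_cos hs h0 x
  have hss := rw_summable_sin hs h0 x
  have hzero : ∑' k : ℤ, a k * Real.sin (k * x) = 0 := by
    refine tsum_odd fun k => ?_
    have : a (-k) = a k := (hsym k).symm
    push_cast [this]
    ring_nf
    rw [Real.sin_neg]  -- adjust
    ring
  calc charFun a x
      = ∑' k : ℤ, (((a k * Real.cos (k * x) : ℝ) : ℂ) + ((a k * Real.sin (k * x) : ℝ) : ℂ) * Complex.I) :=
        tsum_congr fun k => charFun_term_eq k x
    _ = (∑' k : ℤ, ((a k * Real.cos (k * x) : ℝ) : ℂ))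
        + (∑' k : ℤ, ((a k * Real.sin (k * x) : ℝ) : ℂ) * Complex.I) := by
        refine Summable.tsum_add (Complex.summable_ofReal.2 hsc) ((Complex.summable_ofReal.2 hss).mul_right _)
    _ = ((rwF a x : ℝ) : ℂ) := by
        rw [tsum_mul_right, ← Complex.ofReal_tsum, ← Complex.ofReal_tsum, hzero, rwF]
        simp

lemma rwF_zero (h1 : (∑' n, a n) = 1) : rwF a 0 = 1 := by
  rw [rwF]
  simp [h1]

lemma rwF_even (x : ℝ) : rwF a (-x) = rwF a x := by
  unfold rwF
  refine tsum_congr fun k => ?_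
  rw [mul_neg, Real.cos_neg]

lemma rwF_le_one (h0 : ∀ n, 0 ≤ a n) (hs : Summable a) (h1 : (∑' n, a n) = 1) (x : ℝ) :
    rwF a x ≤ 1 := by
  rw [← h1, rwF]
  refine Summable.tsum_le_tsum (fun k => ?_) (rw_summable_cos hs h0 x) hs
  calc a k * Real.cos (k * x) ≤ a k * 1 :=
        mul_le_mul_of_nonneg_left (Real.cos_le_one _) (h0 k)
    _ = a k := mul_one _

lemma rwF_abs_le_one (h0 : ∀ n, 0 ≤ a n) (hs : Summable a) (h1 : (∑' n, a n) = 1) (x : ℝ) :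
    |rwF a x| ≤ 1 := by
  rw [abs_le]
  refine ⟨?_, rwF_le_one h0 hs h1 x⟩
  rw [rwF]
  have := Summable.tsum_le_tsum (f := fun k => -a k) (g := fun k => a k * Real.cos (k * x))
    (fun k => ?_) hs.neg (rw_summable_cos hs h0 x)
  · rw [tsum_neg, h1] at this; linarith
  · calc -a k = a k * (-1) := by ring
      _ ≤ a k * Real.cos (k * x) :=
        mul_le_mul_of_nonneg_left (Real.neg_one_le_cos _) (h0 k)

lemma rwF_continuous (h0 : ∀ n, 0 ≤ a n) (hs : Summable a) : Continuous (rwF a) := by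
  refine continuous_tsum (fun k => by continuity) hs fun k x => ?_
  rw [norm_mul]
  calc ‖a k‖ * ‖Real.cos (k * x)‖ ≤ ‖a k‖ * 1 :=
        mul_le_mul_of_nonneg_left (by rw [Real.norm_eq_abs]; exact Real.abs_cos_le_one _)
          (norm_nonneg _)
    _ = a k := by rw [mul_one, Real.norm_eq_abs, _root_.abs_of_nonneg (h0 k)]

lemma rwF_lt_one (h0 : ∀ n, 0 ≤ a n) (hs : Summable a) (h1 : (∑' n, a n) = 1)
    (hp : AddSubgroup.closure {n : ℤ | a n ≠ 0} = ⊤) {x : ℝ}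
    (hx0 : 0 < x) (hx : x < 2 * Real.pi) : rwF a x < 1 := by
  -- find k0 with a k0 ≠ 0 and cos (k0 x) < 1
  by_cases hex : ∃ k : ℤ, a k ≠ 0 ∧ Real.cos (k * x) < 1
  · obtain ⟨k0, hk0, hck0⟩ := hex
    rw [← h1, rwF]
    refine Summable.tsum_lt_tsum (f := fun k => a k * Real.cos (k * x)) (i := k0) (fun k => ?_) ?_
      (rw_summable_cos hs h0 x) hs
    · calc a k * Real.cos (k * x) ≤ a k * 1 :=
          mul_le_mul_of_nonneg_left (Real.cos_le_one _) (h0 k)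
        _ = a k := mul_one _
    · have : a k0 * Real.cos (k0 * x) < a k0 * 1 :=
        mul_lt_mul_of_pos_left hck0 (lt_of_le_of_ne (h0 k0) (Ne.symm hk0))
      simpa using this
  · exfalso
    push_neg at hex
    -- every k in the support satisfies cos (k x) = 1, hence k x ∈ 2πℤ
    have hsub : {n : ℤ | a n ≠ 0} ⊆ (AddSubgroup.comap
        ((zmultiplesHom ℝ) x) (AddSubgroup.zmultiples (2 * Real.pi)) : AddSubgroup ℤ) := by
      intro k hk
      have h2 := le_antisymm (Real.cos_le_one _) (hex k hk)
      rw [Real.cos_eq_one_iff] at h2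
      obtain ⟨n, hn⟩ := h2
      refine AddSubgroup.mem_comap.2 ?_
      rw [AddSubgroup.mem_zmultiples_iff]
      exact ⟨n, by simpa [zmultiplesHom] using hn⟩
    have htop : (⊤ : AddSubgroup ℤ) ≤ (AddSubgroup.comap
        ((zmultiplesHom ℝ) x) (AddSubgroup.zmultiples (2 * Real.pi)) : AddSubgroup ℤ) := by
      rw [← hp]
      exact (AddSubgroup.closure_le _).2 hsub
    have h1m := htop (AddSubgroup.mem_top 1)
    rw [AddSubgroup.mem_comap, AddSubgroup.mem_zmultiples_iff] at h1m
    obtain ⟨n, hn⟩ := h1m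
    simp only [zmultiplesHom_apply, one_smul, zsmul_eq_mul] at hn
    have hpi := Real.pi_pos
    rcases le_or_gt n 0 with hn0 | hn0
    · have : (n : ℝ) ≤ 0 := by exact_mod_cast hn0
      nlinarith
    · have : (1 : ℝ) ≤ (n : ℝ) := by exact_mod_cast hn0
      nlinarith

end RWBasic

section Moments
open Complex MeasureTheory Set intervalIntegral

variable {a : ℤ → ℝ}

lemma norm_exp_I_int (m : ℤ) (x : ℝ) : ‖Complex.exp (Complex.I * m * x)‖ = 1 := by
  have h : Complex.I * m * x = ((m * x : ℝ) : ℂ) * Complex.I := by push_cast; ring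
  rw [h]
  exact Complex.norm_exp_ofReal_mul_I _

lemma charFun_norm_summable (h0 : ∀ n, 0 ≤ a n) (hs : Summable a) (x : ℝ) :
    Summable fun k : ℤ => ‖(a k : ℂ) * Complex.exp (Complex.I * k * x)‖ := by
  refine hs.congr fun k => ?_
  rw [norm_mul, norm_exp_I_int, mul_one, Complex.norm_real, Real.norm_eq_abs,
    _root_.abs_of_nonneg (h0 k)]

lemma charFun_pow_eq (h0 : ∀ n, 0 ≤ a n) (hs : Summable a) (x : ℝ) (n : ℕ) :
    (charFun a x) ^ n = ∑' k : Fin n → ℤ,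
      ((∏ i, a (k i) : ℝ) : ℂ) * Complex.exp (Complex.I * ((∑ i, k i : ℤ) : ℂ) * x) := by
  rw [_root_.charFun, tsum_pi_prod _ (charFun_norm_summable h0 hs x) n]
  refine tsum_congr fun k => ?_
  rw [Finset.prod_mul_distrib, ← Complex.exp_sum]
  have hE : (∑ i, Complex.I * ((k i : ℤ) : ℂ) * (x : ℂ))
      = Complex.I * ((∑ i, k i : ℤ) : ℂ) * (x : ℂ) := by
    push_cast
    rw [mul_comm Complex.I (∑ i, ((k i : ℤ) : ℂ)), Finset.sum_mul, Finset.sum_mul]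
    exact Finset.sum_congr rfl fun i _ => by ring
  rw [hE]
  push_cast
  ring_nf

-- the basic orthogonality integral
lemma integral_exp_I_int (m : ℤ) :
    (∫ x in (-Real.pi)..Real.pi, Complex.exp (Complex.I * m * x)) =
      if m = 0 then (2 * Real.pi : ℝ) else 0 := by
  rcases eq_or_ne m 0 with rfl | hm
  · norm_num
    push_cast
    ring
  · rw [if_neg hm]
    have hc : Complex.I * m ≠ 0 := by
      simp [Complex.I_ne_zero, Complex.ext_iff, hm]
    have := integral_exp_mul_complex (a := -Real.pi) (b := Real.pi) hc
    have heq : ∀ x : ℝ, Complex.I * m * x = (Complex.I * m) * x := fun x => by ring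
    simp only [mul_assoc] at this ⊢
    rw [this]
    have hper : Complex.exp (Complex.I * (m * (Real.pi : ℂ)))
        = Complex.exp (Complex.I * (m * ((-Real.pi : ℝ) : ℂ))) := by
      have : Complex.I * (m * (Real.pi : ℂ))
          = Complex.I * (m * ((-Real.pi : ℝ) : ℂ)) + (m : ℂ) * (2 * (Real.pi : ℂ) * Complex.I) := by
        push_cast; ring
      rw [this, Complex.exp_add, Complex.exp_int_mul_two_pi_mul_I, mul_one]
    rw [hper, sub_self, zero_div]
    norm_num
  
end Moments

section M2
open Complex MeasureTheory Set intervalIntegral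
open scoped ENNReal NNReal
variable {a : ℤ → ℝ}

lemma rw_moment_complex (h0 : ∀ n, 0 ≤ a n) (hs : Summable a) (n : ℕ) :
    (∫ x in (-Real.pi)..Real.pi, (charFun a x) ^ n)
      = ((2 * Real.pi * returnProb a n : ℝ) : ℂ) := by
  have hπ : -Real.pi ≤ Real.pi := by linarith [Real.pi_pos]
  set f : (Fin n → ℤ) → ℝ → ℂ := fun k x =>
    ((∏ i, a (k i) : ℝ) : ℂ) * Complex.exp (Complex.I * ((∑ i, k i : ℤ) : ℂ) * x) with hf
  have hprod0 : ∀ k : Fin n → ℤ, (0:ℝ) ≤ ∏ i, a (k i) :=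
    fun k => Finset.prod_nonneg fun i _ => h0 _
  have hnorm : ∀ (k : Fin n → ℤ) (x : ℝ), ‖f k x‖ = ∏ i, a (k i) := by
    intro k x
    rw [hf]
    simp only []
    rw [norm_mul, norm_exp_I_int, mul_one, Complex.norm_real, Real.norm_eq_abs,
      _root_.abs_of_nonneg (hprod0 k)]
  have step1 : (∫ x in (-Real.pi)..Real.pi, (charFun a x) ^ n)
      = ∫ x in (-Real.pi)..Real.pi, ∑' k : Fin n → ℤ, f k x :=
    intervalIntegral.integral_congr fun x _ => charFun_pow_eq h0 hs x n
  have hcont : ∀ k : Fin n → ℤ, Continuous (f k) := by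
    intro k
    exact continuous_const.mul (Complex.continuous_exp.comp (by continuity))
  have hfin : ∑' k : Fin n → ℤ, ∫⁻ x, ‖f k x‖₊ ∂(volume.restrict (Ioc (-Real.pi) Real.pi)) ≠ ⊤ := by
    have hlint : ∀ k : Fin n → ℤ, ∫⁻ x, ‖f k x‖₊ ∂(volume.restrict (Ioc (-Real.pi) Real.pi))
        = ENNReal.ofReal (∏ i, a (k i)) * ENNReal.ofReal (2 * Real.pi) := by
      intro k
      have : (fun x : ℝ => (‖f k x‖₊ : ℝ≥0∞)) = fun _ => ENNReal.ofReal (∏ i, a (k i)) := by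
        funext x
        rw [← enorm_eq_nnnorm, ← ofReal_norm, hnorm]
      rw [this, MeasureTheory.lintegral_const, Measure.restrict_apply MeasurableSet.univ,
        Set.univ_inter, Real.volume_Ioc]
      congr 1
      ring
    rw [tsum_congr hlint, ENNReal.tsum_mul_right]
    refine ENNReal.mul_ne_top ?_ ENNReal.ofReal_ne_top
    rw [← ENNReal.ofReal_tsum_of_nonneg hprod0 (summable_pi_prod hs h0 n)]
    exact ENNReal.ofReal_ne_top
  have step3 : (∫ x in Ioc (-Real.pi) Real.pi, ∑' k : Fin n → ℤ, f k x)
      = ∑' k : Fin n → ℤ, ∫ x in Ioc (-Real.pi) Real.pi, f k x :=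
    MeasureTheory.integral_tsum
      (fun k => ((hcont k).aestronglyMeasurable)) hfin
  have step4 : ∀ k : Fin n → ℤ, (∫ x in Ioc (-Real.pi) Real.pi, f k x)
      = ((2 * Real.pi : ℝ) : ℂ) * ((if (∑ i, k i) = 0 then (∏ i, a (k i)) else 0 : ℝ) : ℂ) := by
    intro k
    rw [← intervalIntegral.integral_of_le hπ, hf]
    simp only []
    rw [intervalIntegral.integral_const_mul, integral_exp_I_int]
    rcases eq_or_ne (∑ i, k i) 0 with h | h
    · rw [if_pos h, if_pos h]; push_cast; ring
    · rw [if_neg h, if_neg h]; push_cast; ring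
  rw [step1, intervalIntegral.integral_of_le hπ, step3, tsum_congr step4, tsum_mul_left,
    ← Complex.ofReal_tsum]
  show ((2 * Real.pi : ℝ) : ℂ) * ((returnProb a n : ℝ) : ℂ) = _
  push_cast
  ring



lemma rw_moments (h0 : ∀ n, 0 ≤ a n) (hs : Summable a) (hsym : ∀ n, a n = a (-n)) (n : ℕ) :
    (∫ x in (-Real.pi)..Real.pi, (rwF a x) ^ n) = 2 * Real.pi * returnProb a n := by
  have h1 := rw_moment_complex h0 hs n
  have h2 : (∫ x in (-Real.pi)..Real.pi, (charFun a x) ^ n)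
      = (((∫ x in (-Real.pi)..Real.pi, (rwF a x) ^ n : ℝ)) : ℂ) := by
    rw [← intervalIntegral.integral_ofReal]
    refine intervalIntegral.integral_congr fun x _ => ?_
    rw [charFun_eq_rwF h0 hs hsym x]
    push_cast
    ring
  exact_mod_cast h2.symm.trans h1


end M2

section Dist
open MeasureTheory Set intervalIntegral

variable {F G : ℝ → ℝ}

lemma integral_comp_poly (hF : Continuous F) (p : Polynomial ℝ) :
    (∫ x in (-Real.pi)..Real.pi, p.eval (F x))
      = ∑ i ∈ Finset.range (p.natDegree + 1),
          p.coeff i * ∫ x in (-Real.pi)..Real.pi, F x ^ i := by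
  have h1 : ∀ x : ℝ, p.eval (F x)
      = ∑ i ∈ Finset.range (p.natDegree + 1), p.coeff i * F x ^ i := by
    intro x
    rw [Polynomial.eval_eq_sum_range]
  rw [intervalIntegral.integral_congr (g :=
    fun x => ∑ i ∈ Finset.range (p.natDegree + 1), p.coeff i * F x ^ i) (fun x _ => h1 x)]
  rw [intervalIntegral.integral_finset_sum]
  · exact Finset.sum_congr rfl fun i _ => intervalIntegral.integral_const_mul _ _
  · intro i _
    exact (continuous_const.mul (hF.pow i)).intervalIntegrable _ _

lemma integral_comp_eq_of_moments (hF : Continuous F) (hG : Continuous G)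
    (hFb : ∀ x, |F x| ≤ 1) (hGb : ∀ x, |G x| ≤ 1)
    (hmom : ∀ n : ℕ, (∫ x in (-Real.pi)..Real.pi, F x ^ n) = ∫ x in (-Real.pi)..Real.pi, G x ^ n)
    {h : ℝ → ℝ} (hh : Continuous h) :
    (∫ x in (-Real.pi)..Real.pi, h (F x)) = ∫ x in (-Real.pi)..Real.pi, h (G x) := by
  have hπ : (0:ℝ) < Real.pi := Real.pi_pos
  by_contra hne
  set X := ∫ x in (-Real.pi)..Real.pi, h (F x) with hX
  set Y := ∫ x in (-Real.pi)..Real.pi, h (G x) with hY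
  have hXY : 0 < |X - Y| := by
    rw [abs_pos, sub_ne_zero]; exact hne
  set ε := |X - Y| / (8 * Real.pi + 8) with hε
  have hεpos : 0 < ε := by positivity
  obtain ⟨p, hp⟩ := exists_polynomial_near_of_continuousOn (-1) 1 h hh.continuousOn ε hεpos
  have hbound : ∀ (K : ℝ → ℝ), Continuous K → (∀ x, |K x| ≤ 1) →
      |(∫ x in (-Real.pi)..Real.pi, h (K x)) - ∫ x in (-Real.pi)..Real.pi, p.eval (K x)|
        ≤ ε * (2 * Real.pi) := by
    intro K hK hKb
    have hsub := intervalIntegral.integral_sub (μ := volume) (a := -Real.pi) (b := Real.pi)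
      (f := fun x => h (K x)) (g := fun x => p.eval (K x))
      (Continuous.intervalIntegrable (by exact hh.comp hK) _ _)
      (Continuous.intervalIntegrable (by exact p.continuous.comp hK) _ _)
    rw [← hsub]
    have := intervalIntegral.norm_integral_le_of_norm_le_const
      (C := ε) (f := fun x => h (K x) - p.eval (K x))
      (a := -Real.pi) (b := Real.pi) ?_
    · rw [Real.norm_eq_abs] at this
      calc |∫ x in (-Real.pi)..Real.pi, (h (K x) - p.eval (K x))| ≤ ε * |Real.pi - -Real.pi| := this
        _ = ε * (2 * Real.pi) := by rw [abs_of_pos (by linarith)]; ring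
    · intro x _
      rw [Real.norm_eq_abs, abs_sub_comm]
      exact le_of_lt (hp (K x) (abs_le.1 (hKb x)))
  have hpoly : (∫ x in (-Real.pi)..Real.pi, p.eval (F x))
      = ∫ x in (-Real.pi)..Real.pi, p.eval (G x) := by
    rw [integral_comp_poly hF, integral_comp_poly hG]
    exact Finset.sum_congr rfl fun i _ => by rw [hmom i]
  have h1 := hbound F hF hFb
  have h2 := hbound G hG hGb
  have : |X - Y| ≤ 2 * (ε * (2 * Real.pi)) := by
    calc |X - Y| = |(X - ∫ x in (-Real.pi)..Real.pi, p.eval (F x))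
          + ((∫ x in (-Real.pi)..Real.pi, p.eval (G x)) - Y)| := by rw [hpoly]; ring_nf
      _ ≤ _ := by
          refine (abs_add_le _ _).trans ?_
          rw [abs_sub_comm (∫ x in (-Real.pi)..Real.pi, p.eval (G x)) Y] at *
          linarith [h1, h2]
  rw [hε] at this
  have h3 : |X - Y| / (8 * Real.pi + 8) * (2 * (2 * Real.pi)) < |X - Y| := by
    rw [div_mul_eq_mul_div, div_lt_iff₀ (by positivity)]
    nlinarith [hXY, hπ]
  nlinarith [this, h3, hXY, hπ]

end Dist

section Level
open MeasureTheory Set intervalIntegral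

variable {F G : ℝ → ℝ}

lemma vol_level_le (hF : Continuous F) (hG : Continuous G)
    (hint : ∀ h : ℝ → ℝ, Continuous h →
      (∫ x in (-Real.pi)..Real.pi, h (F x)) = ∫ x in (-Real.pi)..Real.pi, h (G x))
    {y δ : ℝ} (hδ : 0 < δ) :
    (volume (Ioc (-Real.pi) Real.pi ∩ F ⁻¹' Ici y)).toReal
      ≤ (volume (Ioc (-Real.pi) Real.pi ∩ G ⁻¹' Ici (y - δ))).toReal := by
  have hπ : -Real.pi ≤ Real.pi := by linarith [Real.pi_pos]
  set q : ℝ → ℝ := fun t => min 1 (max 0 ((t - (y - δ)) / δ)) with hq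
  have hqc : Continuous q := by
    apply continuous_const.min
    exact continuous_const.max (by continuity)
  have hq0 : ∀ t, 0 ≤ q t := fun t => le_min zero_le_one (le_max_left _ _)
  have hq1 : ∀ t, q t ≤ 1 := fun t => min_le_left _ _
  have hqA : ∀ t, y ≤ t → q t = 1 := by
    intro t ht
    rw [hq]
    simp only []
    rw [min_eq_left]
    rw [le_max_iff]
    right
    rw [le_div_iff₀ hδ]
    linarith
  have hqB : ∀ t, t < y - δ → q t = 0 := by
    intro t ht
    have hle : (t - (y - δ)) / δ ≤ 0 := div_nonpos_of_nonpos_of_nonneg (by linarith) hδ.le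
    rw [hq]
    simp only []
    rw [max_eq_left hle, min_eq_right zero_le_one]
  set S := Ioc (-Real.pi) Real.pi ∩ F ⁻¹' Ici y with hS
  set T := Ioc (-Real.pi) Real.pi ∩ G ⁻¹' Ici (y - δ) with hT
  have hSm : MeasurableSet S := measurableSet_Ioc.inter (hF.measurable measurableSet_Ici)
  have hTm : MeasurableSet T := measurableSet_Ioc.inter (hG.measurable measurableSet_Ici)
  have hSfin : volume S < ⊤ :=
    lt_of_le_of_lt (measure_mono (inter_subset_left)) measure_Ioc_lt_top
  have hTfin : volume T < ⊤ :=
    lt_of_le_of_lt (measure_mono (inter_subset_left)) measure_Ioc_lt_top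
  have hqFi : IntegrableOn (fun x => q (F x)) (Ioc (-Real.pi) Real.pi) volume :=
    (hqc.comp hF).integrableOn_Ioc
  have hqGi : IntegrableOn (fun x => q (G x)) (Ioc (-Real.pi) Real.pi) volume :=
    (hqc.comp hG).integrableOn_Ioc
  have step1 : (volume S).toReal = ∫ _ in S, (1 : ℝ) := by
    rw [setIntegral_const]; simp [measureReal_def]
  have step2 : (∫ _ in S, (1 : ℝ)) ≤ ∫ x in S, q (F x) := by
    refine setIntegral_mono_on (integrableOn_const hSfin.ne)
      (hqFi.mono_set inter_subset_left) hSm fun x hx => ?_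
    rw [hqA (F x) hx.2]
  have step3 : (∫ x in S, q (F x)) ≤ ∫ x in Ioc (-Real.pi) Real.pi, q (F x) := by
    refine setIntegral_mono_set hqFi ?_ (HasSubset.Subset.eventuallyLE inter_subset_left)
    exact Filter.Eventually.of_forall fun x => hq0 _
  have step4 : (∫ x in Ioc (-Real.pi) Real.pi, q (F x))
      = ∫ x in Ioc (-Real.pi) Real.pi, q (G x) := by
    have := hint q hqc
    rwa [intervalIntegral.integral_of_le hπ, intervalIntegral.integral_of_le hπ] at this
  have step5 : (∫ x in Ioc (-Real.pi) Real.pi, q (G x))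
      ≤ ∫ x in Ioc (-Real.pi) Real.pi, T.indicator (fun _ => (1:ℝ)) x := by
    refine setIntegral_mono_on hqGi
      ((integrableOn_const measure_Ioc_lt_top.ne).indicator hTm) measurableSet_Ioc
      fun x hx => ?_
    by_cases hxT : x ∈ T
    · rw [indicator_of_mem hxT]; exact hq1 _
    · rw [indicator_of_notMem hxT]
      have : G x < y - δ := by
        by_contra hcon
        push_neg at hcon
        exact hxT ⟨hx, hcon⟩
      rw [hqB (G x) this]
  have step6 : (∫ x in Ioc (-Real.pi) Real.pi, T.indicator (fun _ => (1:ℝ)) x)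
      = (volume T).toReal := by
    rw [setIntegral_indicator hTm]
    have h2 : Ioc (-Real.pi) Real.pi ∩ T = T := inter_eq_right.2 inter_subset_left
    rw [h2, setIntegral_const]
    simp [measureReal_def]
  calc (volume S).toReal = ∫ _ in S, (1:ℝ) := step1
    _ ≤ ∫ x in S, q (F x) := step2
    _ ≤ ∫ x in Ioc (-Real.pi) Real.pi, q (F x) := step3
    _ = ∫ x in Ioc (-Real.pi) Real.pi, q (G x) := step4
    _ ≤ ∫ x in Ioc (-Real.pi) Real.pi, T.indicator (fun _ => (1:ℝ)) x := step5
    _ = (volume T).toReal := step6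

end Level

section LevelSet
open Set

lemma level_set_eq {F φ : ℝ → ℝ} {η : ℝ} (hη : η ∈ Set.Ioo (0:ℝ) 1)
    (hFc : Continuous F) (hFeven : ∀ x, F (-x) = F x)
    (hFlt : ∀ x, 0 < x → x < 2 * Real.pi → F x < 1)
    (hmaps : ∀ y ∈ Icc (1 - η) 1, φ y ∈ Icc 0 (Real.pi / 2))
    (hcont : ContinuousOn φ (Icc (1 - η) 1)) (hone : φ 1 = 0)
    (hinv : ∀ y ∈ Icc (1 - η) 1, F (φ y) = y) :
    ∃ y0, y0 ∈ Ico (1 - η) 1 ∧ ∀ y ∈ Ioc y0 1,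
      Ioc (-Real.pi) Real.pi ∩ F ⁻¹' Ici y = Icc (-(φ y)) (φ y) := by
  obtain ⟨hη0, hη1⟩ := hη
  have hπ := Real.pi_pos
  have h1mem : (1:ℝ) ∈ Icc (1 - η) 1 := ⟨by linarith, le_refl 1⟩
  have hemem : (1 - η : ℝ) ∈ Icc (1 - η) 1 := ⟨le_refl _, by linarith⟩
  have hFabs : ∀ x : ℝ, F |x| = F x := by
    intro x
    rcases abs_cases x with ⟨h, _⟩ | ⟨h, _⟩
    · rw [h]
    · rw [h, hFeven]
  have hinj : InjOn φ (Icc (1 - η) 1) := by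
    intro y1 h1 y2 h2 he
    have := hinv y1 h1
    rw [he, hinv y2 h2] at this
    exact this.symm
  have hanti : StrictAntiOn φ (Icc (1 - η) 1) := by
    refine ContinuousOn.strictAntiOn_of_injOn_Icc (by linarith) ?_ hcont hinj
    rw [hone]
    exact (hmaps _ hemem).1
  set A := φ (1 - η) with hA
  have hA0 : 0 < A := by
    rcases lt_or_eq_of_le (hmaps _ hemem).1 with h | h
    · exact h
    · exfalso
      have : (1 - η : ℝ) = 1 := hinj hemem h1mem (by rw [← h, hone])
      linarith
  have hA2 : A ≤ Real.pi / 2 := (hmaps _ hemem).2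
  have hAπ : A ≤ Real.pi := by linarith
  have himage : Icc 0 A ⊆ φ '' Icc (1 - η) 1 := by
    have := intermediate_value_Icc' (by linarith : (1-η:ℝ) ≤ 1) hcont
    rw [hone, ← hA] at this
    exact this
  obtain ⟨xm, hxm, hmax'⟩ := (isCompact_Icc (a := A) (b := Real.pi)).exists_isMaxOn
    ⟨A, ⟨le_refl _, hAπ⟩⟩ hFc.continuousOn
  have hmax : ∀ x ∈ Icc A Real.pi, F x ≤ F xm := fun x hx => hmax' hx
  have hM1 : F xm < 1 := hFlt xm (lt_of_lt_of_le hA0 hxm.1) (by linarith [hxm.2])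
  refine ⟨max (F xm) (1 - η), ⟨le_max_right _ _, max_lt hM1 (by linarith)⟩, ?_⟩
  intro y hy
  have hymem : y ∈ Icc (1 - η) 1 := ⟨le_trans (le_max_right _ _) hy.1.le, hy.2⟩
  have hyM : F xm < y := lt_of_le_of_lt (le_max_left _ _) hy.1
  have hφy0 : 0 ≤ φ y := (hmaps _ hymem).1
  have hφyA : φ y ≤ A := by
    rcases eq_or_lt_of_le hymem.1 with h | h
    · rw [hA, h]
    · exact (hanti hemem hymem h).le
  have hφyπ : φ y ≤ Real.pi / 2 := (hmaps _ hymem).2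
  ext x
  simp only [mem_inter_iff, mem_Ioc, mem_preimage, mem_Ici, mem_Icc]
  constructor
  · rintro ⟨⟨hx1, hx2⟩, hx3⟩
    have hux : F |x| = F x := hFabs x
    have huπ : |x| ≤ Real.pi := abs_le.2 ⟨by linarith, hx2⟩
    have huA : |x| < A := by
      by_contra hcon
      push_neg at hcon
      have := hmax |x| ⟨hcon, huπ⟩
      rw [hux] at this
      linarith
    obtain ⟨z, hz, hφz⟩ := himage ⟨abs_nonneg x, huA.le⟩
    have hFz : F |x| = z := by rw [← hφz, hinv z hz]
    have hzy : y ≤ z := by rw [← hFz, hux]; exact hx3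
    have : φ z ≤ φ y := by
      rcases eq_or_lt_of_le hzy with h | h
      · rw [h]
      · exact (hanti hymem hz h).le
    rw [hφz] at this
    exact abs_le.1 this
  · rintro ⟨hx1, hx2⟩
    have habs : |x| ≤ φ y := abs_le.2 ⟨hx1, hx2⟩
    obtain ⟨z, hz, hφz⟩ := himage ⟨abs_nonneg x, le_trans habs hφyA⟩
    have hFz : F x = z := by rw [← hFabs x, ← hφz, hinv z hz]
    have hzy : y ≤ z := by
      by_contra hcon
      push_neg at hcon
      have := hanti hz hymem hcon
      rw [hφz] at this
      linarith [habs, this]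
    refine ⟨⟨?_, ?_⟩, ?_⟩
    · nlinarith [abs_le.1 habs, hφyπ]
    · nlinarith [abs_le.1 habs, hφyπ]
    · rw [hFz]; exact hzy

end LevelSet

open MeasureTheory in
/-- For two Type 2 walks (symmetric, primitive, with all step sizes odd) having the
same return probabilities, the even moments of the difference of the derivatives of
the local inverses decay exponentially. -/
theorem moment_difference_estimate_type2 (a b : ℤ → ℝ)
    (ha : IsRandomWalk a) (hb : IsRandomWalk b)
    (hsa : ∀ n : ℤ, a n = a (-n)) (hsb : ∀ n : ℤ, b n = b (-n))
    (hpa : AddSubgroup.closure {n : ℤ | a n ≠ 0} = ⊤)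
    (hpb : AddSubgroup.closure {n : ℤ | b n ≠ 0} = ⊤)
    (hodda : ∀ n : ℤ, a n ≠ 0 → Odd n) (hoddb : ∀ n : ℤ, b n ≠ 0 → Odd n)
    (hret : ∀ n : ℕ, 1 ≤ n → returnProb a n = returnProb b n)
    (η : ℝ) (hη : η ∈ Set.Ioo (0 : ℝ) 1) (φf φg : ℝ → ℝ)
    (hmapsf : ∀ y ∈ Set.Icc (1 - η) 1, φf y ∈ Set.Icc 0 (Real.pi / 2))
    (hmapsg : ∀ y ∈ Set.Icc (1 - η) 1, φg y ∈ Set.Icc 0 (Real.pi / 2))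
    (hcontf : ContinuousOn φf (Set.Icc (1 - η) 1))
    (hcontg : ContinuousOn φg (Set.Icc (1 - η) 1))
    (hdifff : ∀ y ∈ Set.Ioo (1 - η) 1, DifferentiableAt ℝ φf y)
    (hdiffg : ∀ y ∈ Set.Ioo (1 - η) 1, DifferentiableAt ℝ φg y)
    (hderiv_contf : ContinuousOn (deriv φf) (Set.Ioo (1 - η) 1))
    (hderiv_contg : ContinuousOn (deriv φg) (Set.Ioo (1 - η) 1))
    (honef : φf 1 = 0) (honeg : φg 1 = 0)
    (hinvf : ∀ y ∈ Set.Icc (1 - η) 1, charFun a (φf y) = (y : ℂ))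
    (hinvg : ∀ y ∈ Set.Icc (1 - η) 1, charFun b (φg y) = (y : ℂ)) :
    ∃ μ : ℝ, 0 < μ ∧
      (fun n : ℕ => ∫ y in (1 - η)..1, y ^ (2 * n) * (deriv φf y - deriv φg y))
        =o[Filter.atTop] fun n : ℕ => Real.exp (-(2 * μ) * n) := by
  obtain ⟨h0a, h1a, -⟩ := ha
  obtain ⟨h0b, h1b, -⟩ := hb
  have hsa' : Summable a := rw_summable h0a h1a
  have hsb' : Summable b := rw_summable h0b h1b
  obtain ⟨hη0, hη1⟩ := hη
  have hπ := Real.pi_pos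
  have hinvf' : ∀ y ∈ Set.Icc (1 - η) 1, rwF a (φf y) = y := by
    intro y hy
    have h := hinvf y hy
    rw [charFun_eq_rwF h0a hsa' hsa] at h
    exact_mod_cast h
  have hinvg' : ∀ y ∈ Set.Icc (1 - η) 1, rwF b (φg y) = y := by
    intro y hy
    have h := hinvg y hy
    rw [charFun_eq_rwF h0b hsb' hsb] at h
    exact_mod_cast h
  have hmom : ∀ n : ℕ, (∫ x in (-Real.pi)..Real.pi, (rwF a x) ^ n)
      = ∫ x in (-Real.pi)..Real.pi, (rwF b x) ^ n := by
    intro n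
    rcases Nat.eq_zero_or_pos n with rfl | hn
    · simp
    · rw [rw_moments h0a hsa' hsa n, rw_moments h0b hsb' hsb n, hret n hn]
  have hFac : Continuous (rwF a) := rwF_continuous h0a hsa'
  have hFbc : Continuous (rwF b) := rwF_continuous h0b hsb'
  have hint : ∀ h : ℝ → ℝ, Continuous h →
      (∫ x in (-Real.pi)..Real.pi, h (rwF a x)) = ∫ x in (-Real.pi)..Real.pi, h (rwF b x) :=
    fun h hh => integral_comp_eq_of_moments hFac hFbc
      (rwF_abs_le_one h0a hsa' h1a) (rwF_abs_le_one h0b hsb' h1b) hmom hh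
  obtain ⟨y0a, hy0a, hlva⟩ := level_set_eq ⟨hη0, hη1⟩ hFac (rwF_even (a := a))
    (fun x hx1 hx2 => rwF_lt_one h0a hsa' h1a hpa hx1 hx2) hmapsf hcontf honef hinvf'
  obtain ⟨y0b, hy0b, hlvb⟩ := level_set_eq ⟨hη0, hη1⟩ hFbc (rwF_even (a := b))
    (fun x hx1 hx2 => rwF_lt_one h0b hsb' h1b hpb hx1 hx2) hmapsg hcontg honeg hinvg'
  set y1 := max y0a y0b with hy1def
  have hy1lt : y1 < 1 := max_lt hy0a.2 hy0b.2
  have hy1ge : 1 - η ≤ y1 := le_trans hy0a.1 (le_max_left _ _)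
  have hy1pos : 0 < y1 := by linarith
  -- one-sided comparison
  have oneside : ∀ (F G φF φG : ℝ → ℝ) (y0F y0G : ℝ),
      (∀ h : ℝ → ℝ, Continuous h →
        (∫ x in (-Real.pi)..Real.pi, h (F x)) = ∫ x in (-Real.pi)..Real.pi, h (G x)) →
      (∀ y ∈ Set.Ioc y0F 1,
        Set.Ioc (-Real.pi) Real.pi ∩ F ⁻¹' Set.Ici y = Set.Icc (-(φF y)) (φF y)) →
      (∀ y ∈ Set.Ioc y0G 1,
        Set.Ioc (-Real.pi) Real.pi ∩ G ⁻¹' Set.Ici y = Set.Icc (-(φG y)) (φG y)) →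
      Continuous F → Continuous G →
      (∀ y ∈ Set.Icc (1 - η) 1, 0 ≤ φF y) → (∀ y ∈ Set.Icc (1 - η) 1, 0 ≤ φG y) →
      ContinuousOn φG (Set.Icc (1 - η) 1) →
      1 - η ≤ y0F → 1 - η ≤ y0G →
      ∀ y, max y0F y0G < y → y < 1 → φF y ≤ φG y := by
    intro F G φF φG y0F y0G hFG hlF hlG hFc hGc hφF0 hφG0 hGcont hyF hyG y hymax hylt
    have hyF' : y0F < y := lt_of_le_of_lt (le_max_left _ _) hymax
    have hyG' : y0G < y := lt_of_le_of_lt (le_max_right _ _) hymax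
    have hymem : y ∈ Set.Icc (1 - η) 1 := ⟨by linarith, hylt.le⟩
    have hstep : ∀ δ : ℝ, 0 < δ → δ < y - y0G → 2 * φF y ≤ 2 * φG (y - δ) := by
      intro δ hδ0 hδ1
      have hmem2 : (y - δ) ∈ Set.Icc (1 - η) 1 := ⟨by linarith, by linarith⟩
      have h1 := vol_level_le hFc hGc hFG hδ0 (y := y)
      rw [hlF y ⟨hyF', hylt.le⟩, hlG (y - δ) ⟨by linarith, by linarith⟩] at h1
      have e1 : (volume (Set.Icc (-(φF y)) (φF y))).toReal = 2 * φF y := by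
        rw [Real.volume_Icc, ENNReal.toReal_ofReal (by linarith [hφF0 y hymem])]; ring
      have e2 : (volume (Set.Icc (-(φG (y - δ))) (φG (y - δ)))).toReal = 2 * φG (y - δ) := by
        rw [Real.volume_Icc, ENNReal.toReal_ofReal (by linarith [hφG0 _ hmem2])]; ring
      rw [e1, e2] at h1
      exact h1
    have hlim : Filter.Tendsto (fun δ : ℝ => 2 * φG (y - δ)) (nhdsWithin 0 (Set.Ioi 0))
        (nhds (2 * φG y)) := by
      have hty : Filter.Tendsto (fun δ : ℝ => y - δ) (nhdsWithin 0 (Set.Ioi 0))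
          (nhdsWithin y (Set.Icc (1 - η) 1)) := by
        rw [tendsto_nhdsWithin_iff]
        constructor
        · have h2 : Filter.Tendsto (fun δ : ℝ => y - δ) (nhds 0) (nhds (y - 0)) :=
            tendsto_const_nhds.sub Filter.tendsto_id
          simpa using h2.mono_left nhdsWithin_le_nhds
        · filter_upwards [Ioo_mem_nhdsGT_of_mem
            (Set.left_mem_Ico.2 (show (0:ℝ) < y - (1 - η) by linarith))] with δ hδ
          exact ⟨by linarith [hδ.2], by linarith [hδ.1]⟩
      exact (Filter.Tendsto.const_mul 2 ((hGcont y hymem).tendsto.comp hty))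
    have hev : ∀ᶠ δ in nhdsWithin (0:ℝ) (Set.Ioi 0), 2 * φF y ≤ 2 * φG (y - δ) := by
      filter_upwards [Ioo_mem_nhdsGT_of_mem
        (Set.left_mem_Ico.2 (show (0:ℝ) < y - y0G by linarith))] with δ hδ
      exact hstep δ hδ.1 (by linarith [hδ.2])
    have := ge_of_tendsto hlim hev
    linarith
  have hfg : ∀ y ∈ Set.Ioo y1 1, φf y = φg y := by
    intro y hy
    have h1 := oneside (rwF a) (rwF b) φf φg y0a y0b hint hlva hlvb hFac hFbc
      (fun y hy => (hmapsf y hy).1) (fun y hy => (hmapsg y hy).1) hcontg hy0a.1 hy0b.1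
      y hy.1 hy.2
    have h2 := oneside (rwF b) (rwF a) φg φf y0b y0a (fun h hh => (hint h hh).symm)
      hlvb hlva hFbc hFac (fun y hy => (hmapsg y hy).1) (fun y hy => (hmapsf y hy).1)
      hcontf hy0b.1 hy0a.1 y (by rw [max_comm]; exact hy.1) hy.2
    linarith
  have hderiv_eq : ∀ y ∈ Set.Ioo y1 1, deriv φf y = deriv φg y := by
    intro y hy
    apply Filter.EventuallyEq.deriv_eq
    exact Filter.eventuallyEq_of_mem (isOpen_Ioo.mem_nhds hy) hfg
  -- final assembly
  set y2 : ℝ := (1 + y1) / 2 with hy2def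
  have hy2a : y1 < y2 := by rw [hy2def]; linarith
  have hy2b : y2 < 1 := by rw [hy2def]; linarith
  have hy2pos : 0 < y2 := by linarith
  have hηy2 : 1 - η < y2 := by linarith
  by_cases HI : IntervalIntegrable (fun y => deriv φf y - deriv φg y) volume (1 - η) 1
  · -- integrable case
    set μ := -(Real.log y2) / 2 with hμdef
    have hμpos : 0 < μ := by
      have := Real.log_neg hy2pos hy2b
      rw [hμdef]; linarith
    have hgexp : ∀ n : ℕ, Real.exp (-(2 * μ) * n) = y2 ^ n := by
      intro n
      have h2 : -(2 * μ) * (n:ℝ) = (n:ℝ) * Real.log y2 := by rw [hμdef]; ring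
      rw [h2, Real.exp_nat_mul, Real.exp_log hy2pos]
    refine ⟨μ, hμpos, ?_⟩
    have hsub1 : Set.uIcc (1 - η) y2 ⊆ Set.uIcc (1 - η) 1 := by
      rw [Set.uIcc_of_le (by linarith), Set.uIcc_of_le (by linarith)]
      exact Set.Icc_subset_Icc le_rfl (by linarith)
    have hsub2 : Set.uIcc y2 1 ⊆ Set.uIcc (1 - η) 1 := by
      rw [Set.uIcc_of_le (by linarith), Set.uIcc_of_le (by linarith)]
      exact Set.Icc_subset_Icc (by linarith) le_rfl
    set C := ∫ y in (1 - η)..y2, |deriv φf y - deriv φg y| with hCdef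
    have hCint : IntervalIntegrable (fun y => |deriv φf y - deriv φg y|) volume (1 - η) y2 :=
      (HI.mono_set hsub1).abs
    have hbound : ∀ n : ℕ, ‖∫ y in (1 - η)..1, y ^ (2 * n) * (deriv φf y - deriv φg y)‖
        ≤ C * y2 ^ (2 * n) := by
      intro n
      have hint1 : IntervalIntegrable (fun y => y ^ (2 * n) * (deriv φf y - deriv φg y))
          volume (1 - η) y2 :=
        (HI.mono_set hsub1).continuousOn_mul (continuous_pow _).continuousOn
      have hint2 : IntervalIntegrable (fun y => y ^ (2 * n) * (deriv φf y - deriv φg y))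
          volume y2 1 :=
        (HI.mono_set hsub2).continuousOn_mul (continuous_pow _).continuousOn
      rw [← intervalIntegral.integral_add_adjacent_intervals hint1 hint2]
      have hzero2 : (∫ y in y2..1, y ^ (2 * n) * (deriv φf y - deriv φg y)) = 0 := by
        have hae : ∀ᵐ x : ℝ, x ∈ Set.uIoc y2 1 →
            x ^ (2 * n) * (deriv φf x - deriv φg x) = 0 := by
          have hone : ∀ᵐ x : ℝ, x ≠ (1:ℝ) := by
            rw [MeasureTheory.ae_iff]
            have : {x : ℝ | ¬ x ≠ 1} = {1} := by ext x; simp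
            rw [this]
            exact Real.volume_singleton
          filter_upwards [hone] with x hx1 hx2
          rw [Set.uIoc_of_le (by linarith : y2 ≤ 1)] at hx2
          have hxIoo : x ∈ Set.Ioo y1 1 :=
            ⟨lt_trans hy2a hx2.1, lt_of_le_of_ne hx2.2 hx1⟩
          rw [hderiv_eq x hxIoo, sub_self, mul_zero]
        rw [intervalIntegral.integral_congr_ae hae]
        simp
      rw [hzero2, add_zero]
      have hb := intervalIntegral.norm_integral_le_of_norm_le
        (f := fun y => y ^ (2 * n) * (deriv φf y - deriv φg y))
        (g := fun y => y2 ^ (2 * n) * |deriv φf y - deriv φg y|)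
        (μ := volume) (a := 1 - η) (b := y2) (by linarith) ?_ (hCint.const_mul _)
      · refine hb.trans ?_
        rw [intervalIntegral.integral_const_mul]
        have hCnn : (0:ℝ) ≤ C := by
          rw [hCdef]
          exact intervalIntegral.integral_nonneg (by linarith) fun u _ => abs_nonneg _
        exact le_of_eq (mul_comm _ _)
      · filter_upwards with t ht
        rw [norm_mul, Real.norm_eq_abs, Real.norm_eq_abs, abs_pow]
        apply mul_le_mul_of_nonneg_right _ (abs_nonneg _)
        apply pow_le_pow_left₀ (abs_nonneg t)
        rw [abs_of_pos (by linarith [ht.1] : (0:ℝ) < t)]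
        exact ht.2
    rw [Asymptotics.isLittleO_iff]
    intro c hc
    have htend : Filter.Tendsto (fun n : ℕ => C * y2 ^ n) Filter.atTop (nhds 0) := by
      have := tendsto_pow_atTop_nhds_zero_of_lt_one hy2pos.le hy2b
      simpa using this.const_mul C
    filter_upwards [htend.eventually_lt_const hc] with n hn
    rw [hgexp n]
    calc ‖∫ y in (1 - η)..1, y ^ (2 * n) * (deriv φf y - deriv φg y)‖
        ≤ C * y2 ^ (2 * n) := hbound n
      _ = (C * y2 ^ n) * y2 ^ n := by rw [two_mul, pow_add]; ring
      _ ≤ c * y2 ^ n := mul_le_mul_of_nonneg_right hn.le (pow_nonneg hy2pos.le n)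
      _ ≤ c * ‖y2 ^ n‖ := by rw [Real.norm_eq_abs, abs_of_nonneg (pow_nonneg hy2pos.le n)]
  · -- non-integrable case: every integral is zero
    refine ⟨1, one_pos, ?_⟩
    have hzero : ∀ n : ℕ,
        (∫ y in (1 - η)..1, y ^ (2 * n) * (deriv φf y - deriv φg y)) = 0 := by
      intro n
      apply intervalIntegral.integral_undef
      intro hcon
      apply HI
      have h2 : ContinuousOn (fun y : ℝ => (y ^ (2 * n))⁻¹) (Set.uIcc (1 - η) 1) := by
        apply ContinuousOn.inv₀ (continuous_pow _).continuousOn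
        intro y hy
        rw [Set.uIcc_of_le (by linarith : (1 - η : ℝ) ≤ 1)] at hy
        have : 0 < y := by linarith [hy.1]
        positivity
      have h3 := hcon.continuousOn_mul h2
      rw [intervalIntegrable_iff_integrableOn_Ioc_of_le (by linarith : (1 - η : ℝ) ≤ 1)] at h3 ⊢
      refine h3.congr_fun ?_ measurableSet_Ioc
      intro y hy
      have hy0 : y ≠ 0 := by
        have : 0 < y := by linarith [hy.1]
        exact this.ne'
      field_simp
    have heq : (fun n : ℕ => ∫ y in (1 - η)..1, y ^ (2 * n) * (deriv φf y - deriv φg y))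
        = fun _ : ℕ => (0:ℝ) := funext hzero
    rw [heq]
    exact Asymptotics.isLittleO_zero _ _
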